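/- Let φ: {0,1}* -> {0,1,#}* be a uniform substitution defined by φ(0) = u # v and φ(1) = u' # v' where u, u', v, v' ∈ {0,1}*, |u| = |u'|, and |v| = |v'|. Let w be an infinite binary word. If an abelian power z_0 z_1 ... z_{e-1} with e ≥ |u#v| occurs in φ(w), then |u#v| divides |z_0|. -/

import Mathlib

/-- Abelian equivalence of words: each letter occurs equally often. -/
def AbEq {A : Type*} [DecidableEq A] (u v : List A) : Prop :=
  ∀ a : A, u.count a = v.count a

/-- `u` occurs as a (contiguous) factor of the infinite word `x`. -/
def OccursIn {A : Type*} (x : ℕ → A) (u : List A) : Prop :=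
  ∃ i, u = (List.range u.length).map fun j => x (i + j)

/-- An abelian power of exponent `e` and period `m` occurs in `x`. -/
def IsAbPow {A : Type*} [DecidableEq A] (x : ℕ → A) (e m : ℕ) : Prop :=
  0 < e ∧ 0 < m ∧ ∃ u : ℕ → List A,
    (∀ i < e, (u i).length = m) ∧
    (∀ i < e, AbEq (u i) (u 0)) ∧
    OccursIn x (((List.range e).map u).flatten)

/-- Embedding of binary words into `{0,1,#}* = (Fin 3)*`, sending `0 ↦ 0`, `1 ↦ 1`. -/
def emb (u : List (Fin 2)) : List (Fin 3) := u.map Fin.castSucc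

/-- The uniform substitution `φ(0) = u # v`, `φ(1) = u' # v'` with `# = 2`. -/
def phiLetter (u v u' v' : List (Fin 2)) (a : Fin 2) : List (Fin 3) :=
  if a = 0 then emb u ++ (2 : Fin 3) :: emb v else emb u' ++ (2 : Fin 3) :: emb v'

/-- `φ(w)`, applying the `N`-uniform substitution `φ` (with `N = |u#v|`)
letterwise to the infinite binary word `w`. -/
def phiWord (u v u' v' : List (Fin 2)) (w : ℕ → Fin 2) (n : ℕ) : Fin 3 :=
  phiLetter u v u' v' (w (n / (u.length + 1 + v.length))) |>.getD
    (n % (u.length + 1 + v.length)) 0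

/- ### Auxiliary lemmas -/

lemma mod_eq_iff_dvd (N a r : ℕ) (hN : 0 < N) (hr : r < N) :
    a % N = r ↔ N ∣ (a + (N - r)) := by
  constructor
  · intro h
    have h1 := Nat.div_add_mod a N
    refine ⟨a / N + 1, ?_⟩
    have h2 : N * (a / N + 1) = N * (a / N) + N := by ring
    omega
  · rintro ⟨k, hk⟩
    have hk1 : 1 ≤ k := by
      rcases k with _ | k
      · simp at hk; omega
      · omega
    have ha : a = N * (k - 1) + r := by
      have h2 : N * k = N * (k-1) + N := by
        conv_lhs => rw [show k = (k-1)+1 from by omega]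
        rw [Nat.mul_succ]
      omega
    rw [ha, Nat.mul_add_mod]
    exact Nat.mod_eq_of_lt hr

lemma count_filter_mod (N r : ℕ) (hN : 0 < N) (hr : r < N) (p m : ℕ) :
    ((List.range m).filter (fun t => decide ((p + t) % N = r))).length
      = (p + m + (N - 1 - r)) / N - (p + (N - 1 - r)) / N := by
  induction m with
  | zero => simp
  | succ m ih =>
    rw [List.range_succ, List.filter_append, List.length_append, ih]
    have hle : (p + (N-1-r)) / N ≤ (p + m + (N-1-r)) / N :=
      Nat.div_le_div_right (by omega)
    have hsucc : (p + (m+1) + (N-1-r)) / N = (p + m + (N-1-r)) / N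
        + if N ∣ (p + m + (N-1-r) + 1) then 1 else 0 := by
      have h4 := @Nat.succ_div (p + m + (N-1-r)) N
      have e : p + (m+1) + (N-1-r) = (p + m + (N-1-r)) + 1 := by omega
      rw [e, h4]
    have hdvd : (N ∣ (p + m + (N-1-r) + 1)) ↔ ((p + m) % N = r) := by
      rw [mod_eq_iff_dvd N (p+m) r hN hr]
      have e2 : p + m + (N-1-r) + 1 = p + m + (N - r) := by omega
      rw [e2]
    by_cases hc : (p + m) % N = r
    · rw [if_pos (hdvd.mpr hc)] at hsucc
      simp [List.filter_singleton, hc]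
      omega
    · rw [if_neg (fun h => hc (hdvd.mp h))] at hsucc
      simp [List.filter_singleton, hc]
      omega

lemma emb_getD_ne_two (s : List (Fin 2)) (k : ℕ) (hk : k < s.length) :
    (emb s).getD k 0 ≠ 2 := by
  rw [List.getD_eq_getElem _ _ (by simpa [emb] using hk)]
  simp only [emb, List.getElem_map]
  intro h
  have := congrArg Fin.val h
  simp [Fin.castSucc, Fin.castAdd, Fin.castLE] at this
  omega

lemma core_getD (s t : List (Fin 2)) (k : ℕ) (hk : k < s.length + 1 + t.length) :
    ((emb s ++ (2 : Fin 3) :: emb t).getD k 0 = 2) ↔ k = s.length := by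
  have hs : (emb s).length = s.length := by simp [emb]
  rcases lt_trichotomy k s.length with h | h | h
  · rw [List.getD_append _ _ _ _ (by omega)]
    simp only [ne_eq, emb_getD_ne_two s k h, iff_false, false_iff]
    omega
  · subst h
    rw [List.getD_append_right _ _ _ _ (by omega)]
    simp [hs]
  · rw [List.getD_append_right _ _ _ _ (by omega), hs]
    have e : k - s.length = (k - s.length - 1) + 1 := by omega
    rw [e, List.getD_cons_succ]
    simp only [ne_eq, emb_getD_ne_two t _ (show k - s.length - 1 < t.length by omega),
      iff_false, false_iff]
    omega

lemma phiWord_eq_two (u v u' v' : List (Fin 2)) (hu : u.length = u'.length)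
    (hv : v.length = v'.length) (w : ℕ → Fin 2) (n : ℕ) :
    (phiWord u v u' v' w n = 2) ↔ n % (u.length + 1 + v.length) = u.length := by
  set N := u.length + 1 + v.length with hN
  have hNpos : 0 < N := by omega
  have hk : n % N < N := Nat.mod_lt _ hNpos
  unfold phiWord phiLetter
  by_cases ha : w (n / N) = 0
  · rw [if_pos ha]
    exact core_getD u v (n % N) (by omega)
  · rw [if_neg ha]
    rw [core_getD u' v' (n % N) (by omega)]
    omega

lemma flatten_len {A : Type*} (m : ℕ) :
    ∀ (e : ℕ) (us : ℕ → List A), (∀ i < e, (us i).length = m) →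
      ((List.range e).map us).flatten.length = e * m := by
  intro e
  induction e with
  | zero => simp
  | succ e ih =>
    intro us h
    rw [List.range_succ, List.map_append, List.flatten_append]
    simp only [List.map_cons, List.map_nil, List.flatten_cons, List.flatten_nil,
      List.length_append, List.append_nil]
    rw [ih us (fun i hi => h i (by omega)), h e (by omega)]
    ring

lemma blocks_eq {A : Type*} (x : ℕ → A) (m : ℕ) :
    ∀ (e : ℕ) (us : ℕ → List A) (i₀ : ℕ),
      (∀ i < e, (us i).length = m) →
      ((List.range e).map us).flatten = (List.range (e * m)).map (fun k => x (i₀ + k)) →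
      ∀ j < e, us j = (List.range m).map (fun t => x (i₀ + j * m + t)) := by
  intro e
  induction e with
  | zero => intro us i₀ _ _ j hj; omega
  | succ e ih =>
    intro us i₀ hlen heq j hj
    rw [List.range_succ, List.map_append, List.flatten_append] at heq
    simp only [List.map_cons, List.map_nil, List.flatten_cons, List.flatten_nil,
      List.append_nil] at heq
    have hsplit : (List.range ((e+1) * m)).map (fun k => x (i₀ + k))
        = (List.range (e * m)).map (fun k => x (i₀ + k))
          ++ (List.range m).map (fun t => x (i₀ + e * m + t)) := by
      have : (e+1) * m = e * m + m := by ring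
      rw [this, List.range_add, List.map_append, List.map_map]
      congr 1
      apply List.map_congr_left
      intro t _
      simp [Nat.add_assoc]
    rw [hsplit] at heq
    have hl1 : ((List.range e).map us).flatten.length
        = ((List.range (e * m)).map (fun k => x (i₀ + k))).length := by
      rw [flatten_len m e us (fun i hi => hlen i (by omega))]
      simp
    obtain ⟨h1, h2⟩ := List.append_inj heq hl1
    rcases Nat.lt_or_ge j e with hje | hje
    · exact ih us i₀ (fun i hi => hlen i (by omega)) h1 j hje
    · have : j = e := by omega
      subst this
      exact h2

/-- If `|u| = |u'|` and `|v| = |v'|` and an abelian power of exponent `e ≥ |u#v|`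
and period `m` occurs in `φ(w)`, then `|u#v|` divides `m`. -/
theorem period_divisible_of_abelian_power_in_phi
    (u v u' v' : List (Fin 2)) (hu : u.length = u'.length) (hv : v.length = v'.length)
    (w : ℕ → Fin 2) (e m : ℕ) (he : u.length + 1 + v.length ≤ e)
    (h : IsAbPow (phiWord u v u' v' w) e m) :
    (u.length + 1 + v.length) ∣ m := by
  obtain ⟨he0, hm0, us, hlen, habel, i₀, hocc⟩ := h
  set N := u.length + 1 + v.length with hN
  set r := u.length with hr
  have hNpos : 0 < N := by omega
  have hrN : r < N := by omega
  set x := phiWord u v u' v' w with hx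
  rw [flatten_len m e us hlen] at hocc
  have hblocks := blocks_eq x m e us i₀ hlen hocc
  -- count of `2` in each block
  set c := N - 1 - r with hc
  have hcount : ∀ j < e, (us j).count 2
      = (i₀ + (j+1) * m + c) / N - (i₀ + j * m + c) / N := by
    intro j hj
    rw [hblocks j hj]
    rw [List.count_eq_countP, List.countP_map, List.countP_eq_length_filter]
    have hfc : ((List.range m).filter ((fun a => a == 2) ∘ fun t => x (i₀ + j * m + t)))
        = (List.range m).filter (fun t => decide (((i₀ + j * m) + t) % N = r)) := by
      apply List.filter_congr
      intro t _
      simp only [Function.comp]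
      rw [Bool.eq_iff_iff]
      simp only [beq_iff_eq, decide_eq_true_eq]
      rw [hx]
      rw [show (i₀ + j * m) + t = i₀ + j * m + t from by ring]
      exact phiWord_eq_two u v u' v' hu hv w _
    rw [hfc, count_filter_mod N r hNpos hrN (i₀ + j * m) m]
    congr 2
    ring
  -- A and B
  set A : ℕ → ℕ := fun j => (i₀ + j * m + c) / N with hA
  set B : ℕ → ℕ := fun j => (i₀ + j * m + c) % N with hB
  have hAmono : ∀ j, A j ≤ A (j+1) := fun j =>
    Nat.div_le_div_right (by nlinarith [Nat.le_refl m])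
  have hdm : ∀ j, i₀ + j * m + c = N * A j + B j := fun j =>
    (Nat.div_add_mod _ N).symm
  have hBlt : ∀ j, B j < N := fun j => Nat.mod_lt _ hNpos
  set C := A 1 - A 0 with hC
  have hstep : ∀ j < e, A (j+1) = A j + C := by
    intro j hj
    have h1 : (us j).count 2 = A (j+1) - A j := hcount j hj
    have h0 : (us 0).count 2 = A 1 - A 0 := by
      have h5 := hcount 0 he0
      have e1 : A 1 = (i₀ + (0+1) * m + c) / N := by rw [hA]
      have e0 : A 0 = (i₀ + 0 * m + c) / N := by rw [hA]
      rw [e1, e0]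
      exact h5
    have hab := habel j hj 2
    have h2 := hAmono j
    have h3 := hAmono 0
    omega
  -- B recurrence over ℤ
  have hBstep : ∀ j < e, (B (j+1) : ℤ) = B j + ((m : ℤ) - N * C) := by
    intro j hj
    have e1 := hdm j
    have e2 := hdm (j+1)
    have e3 := hstep j hj
    have e4 : (N : ℤ) * (A (j+1)) = N * A j + N * C := by
      rw [e3]; push_cast; ring
    have e5 : ((j+1) : ℤ) * m = j * m + m := by ring
    have e1' : (i₀ : ℤ) + j * m + c = N * A j + B j := by exact_mod_cast e1
    have e2' : (i₀ : ℤ) + (j+1) * m + c = N * A (j+1) + B (j+1) := by exact_mod_cast e2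
    linarith
  have hBlin : ∀ j ≤ e, (B j : ℤ) = B 0 + j * ((m : ℤ) - N * C) := by
    intro j hj
    induction j with
    | zero => simp
    | succ j ih =>
      rw [hBstep j (by omega), ih (by omega)]
      push_cast
      ring
  -- conclude
  set D := (m : ℤ) - N * C with hD
  have hBe := hBlin e le_rfl
  have hB0 : (B 0 : ℤ) < N := by exact_mod_cast hBlt 0
  have hBe1 : (0 : ℤ) ≤ B e := Int.natCast_nonneg _
  have hBe2 : (B e : ℤ) < N := by exact_mod_cast hBlt e
  have heN : (N : ℤ) ≤ e := by exact_mod_cast he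
  have hD0 : D = 0 := by
    rcases lt_trichotomy D 0 with hd | hd | hd
    · exfalso
      have : (e : ℤ) * D ≤ e * (-1) := by
        apply mul_le_mul_of_nonneg_left (by omega) (by positivity)
      have hNe : (0:ℤ) < N := by exact_mod_cast hNpos
      nlinarith
    · exact hd
    · exfalso
      have : (e : ℤ) * 1 ≤ e * D := by
        apply mul_le_mul_of_nonneg_left (by omega) (by positivity)
      have hNe : (0:ℤ) < N := by exact_mod_cast hNpos
      nlinarith
  have hmNC : (m : ℤ) = N * C := by omega
  exact ⟨C, by exact_mod_cast hmNC⟩
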